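/- Suppose (x, τ) is a solution of the threshold delay differential equation on [0,∞), and suppose there is c > 0 with |x(t)| ≤ c for all t ∈ [−r, 0]. Then |x(t)| ≤ c + dU/γ for all t ≥ −r. -/

import Mathlib

/-- A priori bound for solutions of the threshold delay differential
equation: if `|x t| ≤ c` on the initial interval `[-a/v0, 0]`, then
`|x t| ≤ c + dU / γ` (with `dU = β gU vU / v0`) for all `t ≥ -a/v0`. -/
theorem threshold_dde_apriori_bound
    (β μ γ a v0 vU g0 gU : ℝ)
    (hβ : 0 < β) (hμ : 0 < μ) (hγ : 0 < γ) (ha : 0 < a)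
    (hv0 : 0 < v0) (hv0U : v0 ≤ vU) (hg0 : 0 < g0) (hg0U : g0 ≤ gU)
    (v g : ℝ → ℝ) (hv : Continuous v) (hg : Continuous g)
    (hvb : ∀ y, v0 ≤ v y ∧ v y ≤ vU) (hgb : ∀ y, g0 ≤ g y ∧ g y ≤ gU)
    (x τ : ℝ → ℝ) (hx : Continuous x)
    (hτpos : ∀ t, 0 ≤ t → 0 < τ t)
    (hthr : ∀ t, 0 ≤ t → (∫ s in (t - τ t)..t, v (x s)) = a)
    (hode : ∀ t, 0 ≤ t →
      HasDerivAt x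
        (β * Real.exp (-μ * τ t) * (v (x t) / v (x (t - τ t))) * g (x (t - τ t))
          - γ * x t) t)
    (c : ℝ) (hc : 0 < c)
    (hinit : ∀ t ∈ Set.Icc (-(a / v0)) 0, |x t| ≤ c) :
    ∀ t, -(a / v0) ≤ t → |x t| ≤ c + β * gU * vU / v0 / γ := by
  have hg0U' : 0 < gU := lt_of_lt_of_le hg0 hg0U
  have hvU : 0 < vU := lt_of_lt_of_le hv0 hv0U
  set dU : ℝ := β * gU * vU / v0 with hdU
  have hdUpos : 0 < dU := by rw [hdU]; positivity
  set M : ℝ := c + dU / γ with hM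
  -- bounds on the production term
  have hp : ∀ s : ℝ, 0 ≤ s →
      0 < β * Real.exp (-μ * τ s) * (v (x s) / v (x (s - τ s))) * g (x (s - τ s)) ∧
      β * Real.exp (-μ * τ s) * (v (x s) / v (x (s - τ s))) * g (x (s - τ s)) ≤ dU := by
    intro s hs
    have h1 : 0 < v (x s) := lt_of_lt_of_le hv0 (hvb _).1
    have h2 : 0 < v (x (s - τ s)) := lt_of_lt_of_le hv0 (hvb _).1
    have h3 : 0 < g (x (s - τ s)) := lt_of_lt_of_le hg0 (hgb _).1
    constructor
    · positivity
    · have he : Real.exp (-μ * τ s) ≤ 1 := by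
        apply Real.exp_le_one_iff.mpr
        have := hτpos s hs
        nlinarith
      have hr : v (x s) / v (x (s - τ s)) ≤ vU / v0 :=
        div_le_div₀ (le_of_lt hvU) (hvb _).2 hv0 (hvb _).1
      calc β * Real.exp (-μ * τ s) * (v (x s) / v (x (s - τ s))) * g (x (s - τ s))
          ≤ β * 1 * (vU / v0) * gU := by
            gcongr
            · exact (hgb _).2
        _ = dU := by rw [hdU]; ring
  -- main bound on [0, b] for any b
  have key : ∀ s : ℝ, 0 ≤ s → |x s| ≤ M := by
    intro s hs
    have hx0 : |x 0| ≤ c := hinit 0 ⟨neg_nonpos.mpr (by positivity), le_refl 0⟩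
    have hdg : dU / γ * γ = dU := div_mul_cancel₀ _ (ne_of_gt hγ)
    have hcM : c ≤ M := by
      rw [hM]; nlinarith [div_pos hdUpos hγ]
    have hupper : x s ≤ M := by
      have := image_le_of_deriv_right_lt_deriv_boundary
        (f := x) (f' := fun u => β * Real.exp (-μ * τ u) * (v (x u) / v (x (u - τ u))) * g (x (u - τ u)) - γ * x u)
        (a := 0) (b := s) hx.continuousOn
        (fun u hu => ((hode u hu.1).hasDerivWithinAt))
        (B := fun _ => M) (B' := fun _ => 0)
        ((abs_le.mp hx0).2.trans hcM)
        (fun _ => hasDerivAt_const _ _)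
        ?_ ⟨hs, le_refl s⟩
      · exact this
      · intro u hu hEq
        have hpu := hp u hu.1
        have hxu : x u = M := hEq
        have hγM : γ * M = γ * c + dU := by rw [hM]; field_simp
        nlinarith [hpu.2]
    have hlower : -M ≤ x s := by
      have := image_le_of_deriv_right_lt_deriv_boundary
        (f := fun u => -x u) (f' := fun u => -(β * Real.exp (-μ * τ u) * (v (x u) / v (x (u - τ u))) * g (x (u - τ u)) - γ * x u))
        (a := 0) (b := s) hx.neg.continuousOn
        (fun u hu => ((hode u hu.1).neg.hasDerivWithinAt))
        (B := fun _ => M) (B' := fun _ => 0)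
        (by have := (abs_le.mp hx0).1; simpa using (neg_le.mpr this).trans hcM)
        (fun _ => hasDerivAt_const _ _)
        ?_ ⟨hs, le_refl s⟩
      · have := this; linarith
      · intro u hu hEq
        have hpu := hp u hu.1
        have hxu : x u = -M := by linarith
        have hγM : γ * M = γ * c + dU := by rw [hM]; field_simp
        nlinarith [hpu.1]
    exact abs_le.mpr ⟨hlower, hupper⟩
  intro t ht
  rcases le_or_gt t 0 with h0 | h0
  · have h1 : (0:ℝ) < dU / γ := div_pos hdUpos hγ
    have h2 := hinit t ⟨ht, h0⟩
    rw [hM]; linarith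
  · exact key t h0.le
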